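/- Let A be an LM_θ-algebra. Then every Boolean LM_θ-congruence on A is both a principal LM_θ-congruence on A and a principal θ-congruence on A. -/

import Mathlib

/-- An LM_θ-algebra over a linearly ordered index set `I`:
a bounded distributive lattice with operations `phi i` and `phibar i`. -/
structure LMAlg (I A : Type*) [LinearOrder I] [DistribLattice A] [BoundedOrder A] where
  phi : I → A → A
  phibar : I → A → A
  phi_sup : ∀ i x y, phi i (x ⊔ y) = phi i x ⊔ phi i y
  phi_inf : ∀ i x y, phi i (x ⊓ y) = phi i x ⊓ phi i y
  phi_bot : ∀ i, phi i ⊥ = ⊥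
  phi_top : ∀ i, phi i ⊤ = ⊤
  sup_phibar : ∀ i x, phi i x ⊔ phibar i x = ⊤
  inf_phibar : ∀ i x, phi i x ⊓ phibar i x = ⊥
  phi_phi : ∀ i j x, phi i (phi j x) = phi j x
  phi_mono : ∀ ⦃i j : I⦄, i ≤ j → ∀ x, phi i x ≤ phi j x
  determined : ∀ x y, (∀ i, phi i x = phi i y) → x = y

/-- A prime filter of a bounded distributive lattice. -/
structure PrimeFilter (A : Type*) [DistribLattice A] [BoundedOrder A] where
  carrier : Set A
  top_mem : ⊤ ∈ carrier
  bot_notMem : ⊥ ∉ carrier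
  mem_of_le : ∀ {a b : A}, a ∈ carrier → a ≤ b → b ∈ carrier
  inf_mem : ∀ {a b : A}, a ∈ carrier → b ∈ carrier → a ⊓ b ∈ carrier
  prime : ∀ {a b : A}, a ⊔ b ∈ carrier → a ∈ carrier ∨ b ∈ carrier

variable {I A : Type*} [LinearOrder I] [DistribLattice A] [BoundedOrder A]

/-- Prime filters ordered by inclusion. -/
instance : PartialOrder (PrimeFilter A) where
  le P Q := P.carrier ⊆ Q.carrier
  le_refl _ _ hx := hx
  le_trans _ _ _ h1 h2 _ hx := h2 (h1 hx)
  le_antisymm P Q h1 h2 := by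
    cases P; cases Q
    simp only [PrimeFilter.mk.injEq]
    exact subset_antisymm h1 h2

/-- The map `σ_A`. -/
def sigmaA (a : A) : Set (PrimeFilter A) := {P | a ∈ P.carrier}

/-- The Priestley topology on the set of prime filters, with sub-basis the sets
`σ_A a` and their complements. -/
instance : TopologicalSpace (PrimeFilter A) :=
  TopologicalSpace.generateFrom
    (Set.range (sigmaA (A := A)) ∪ Set.range (fun a : A => (sigmaA a)ᶜ))

/-- The map `f_i^A (P) = φ_i⁻¹(P)` on prime filters. -/
def LMAlg.fA (L : LMAlg I A) (i : I) (P : PrimeFilter A) : PrimeFilter A where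
  carrier := L.phi i ⁻¹' P.carrier
  top_mem := by simp only [Set.mem_preimage, L.phi_top]; exact P.top_mem
  bot_notMem := by simp only [Set.mem_preimage, L.phi_bot]; exact P.bot_notMem
  mem_of_le := by
    intro a b ha hab
    have h1 : L.phi i b = L.phi i a ⊔ L.phi i b := by
      rw [← L.phi_sup, sup_eq_right.mpr hab]
    exact P.mem_of_le ha (le_sup_left.trans_eq h1.symm)
  inf_mem := by
    intro a b ha hb
    simp only [Set.mem_preimage, L.phi_inf]
    exact P.inf_mem ha hb
  prime := by
    intro a b h
    simp only [Set.mem_preimage, L.phi_sup] at h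
    exact P.prime h

/-- An LM_θ-congruence: a bounded-lattice congruence compatible with all `phi i`, `phibar i`. -/
structure IsLMCongr (L : LMAlg I A) (r : A → A → Prop) : Prop where
  refl : ∀ x, r x x
  symm : ∀ {x y}, r x y → r y x
  trans : ∀ {x y z}, r x y → r y z → r x z
  sup_congr : ∀ {x y u v}, r x y → r u v → r (x ⊔ u) (y ⊔ v)
  inf_congr : ∀ {x y u v}, r x y → r u v → r (x ⊓ u) (y ⊓ v)
  phi_congr : ∀ (i : I) {x y}, r x y → r (L.phi i x) (L.phi i y)
  phibar_congr : ∀ (i : I) {x y}, r x y → r (L.phibar i x) (L.phibar i y)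

/-- A θ-congruence: a lattice congruence `r` with `r x y ↔ ∀ i, r (φ_i x) (φ_i y)`. -/
structure IsThetaCongr (L : LMAlg I A) (r : A → A → Prop) : Prop where
  refl : ∀ x, r x x
  symm : ∀ {x y}, r x y → r y x
  trans : ∀ {x y z}, r x y → r y z → r x z
  sup_congr : ∀ {x y u v}, r x y → r u v → r (x ⊔ u) (y ⊔ v)
  inf_congr : ∀ {x y u v}, r x y → r u v → r (x ⊓ u) (y ⊓ v)
  theta : ∀ x y, r x y ↔ ∀ i : I, r (L.phi i x) (L.phi i y)

/-- `Y` is semimodal if `f i '' Y ⊆ Y` for all `i`. -/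
def Semimodal {I X : Type*} (f : I → X → X) (Y : Set X) : Prop := ∀ i, f i '' Y ⊆ Y

/-- `Y` is modal if `f i ⁻¹' Y = Y` for all `i`. -/
def Modal {I X : Type*} (f : I → X → X) (Y : Set X) : Prop := ∀ i, f i ⁻¹' Y = Y

/-- `Y` is a θ-subset if `⋃ i, f i '' Y ⊆ Y ⊆ closure (⋃ i, f i '' Y)`. -/
def ThetaSubset {I X : Type*} [TopologicalSpace X] (f : I → X → X) (Y : Set X) : Prop :=
  (⋃ i, f i '' Y) ⊆ Y ∧ Y ⊆ closure (⋃ i, f i '' Y)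

/-- The relation `Θ` determined by an (open) subset `G` of the dual space:
`(a,b) ∈ Θ(G)` iff `σ_A a △ σ_A b ⊆ G`. -/
def thetaO (G : Set (PrimeFilter A)) : A → A → Prop :=
  fun a b => symmDiff (sigmaA a) (sigmaA b) ⊆ G

/-- `r` is the principal LM_θ-congruence generated by `(a,b)`. -/
def IsPrincipalLMCongrOn (L : LMAlg I A) (r : A → A → Prop) (a b : A) : Prop :=
  IsLMCongr L r ∧ r a b ∧ ∀ s, IsLMCongr L s → s a b → ∀ x y, r x y → s x y

/-- `r` is the principal θ-congruence generated by `(a,b)`. -/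
def IsPrincipalThetaCongrOn (L : LMAlg I A) (r : A → A → Prop) (a b : A) : Prop :=
  IsThetaCongr L r ∧ r a b ∧ ∀ s, IsThetaCongr L s → s a b → ∀ x y, r x y → s x y

/-- `r` is a principal LM_θ-congruence. -/
def IsPrincipalLMCongr (L : LMAlg I A) (r : A → A → Prop) : Prop :=
  ∃ a b, IsPrincipalLMCongrOn L r a b

/-- `r` is a principal θ-congruence. -/
def IsPrincipalThetaCongr (L : LMAlg I A) (r : A → A → Prop) : Prop :=
  ∃ a b, IsPrincipalThetaCongrOn L r a b

/-- `r` is a Boolean LM_θ-congruence: a complemented element of the lattice of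
LM_θ-congruences ordered by inclusion (the bottom element is equality and the
join of `r` and its complement, i.e. the least congruence containing both, is
the total relation). -/
def IsBooleanLMCongr (L : LMAlg I A) (r : A → A → Prop) : Prop :=
  IsLMCongr L r ∧ ∃ s, IsLMCongr L s ∧
    (∀ x y, (r x y ∧ s x y) ↔ x = y) ∧
    (∀ t, IsLMCongr L t → (∀ x y, r x y → t x y) → (∀ x y, s x y → t x y) → ∀ x y, t x y)


namespace Stmt16Aux

variable {I A : Type*} [LinearOrder I] [DistribLattice A] [BoundedOrder A]

/-- A "good" element: fixed by all `phi j` and complemented with a complement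
also fixed by all `phi j`. -/
def Good (L : LMAlg I A) (e : A) : Prop :=
  (∀ j, L.phi j e = e) ∧ ∃ e', (∀ j, L.phi j e' = e') ∧ IsCompl e e'

theorem good_bot (L : LMAlg I A) : Good L (⊥ : A) :=
  ⟨L.phi_bot, ⊤, L.phi_top, isCompl_bot_top⟩

theorem good_top (L : LMAlg I A) : Good L (⊤ : A) :=
  ⟨L.phi_top, ⊥, L.phi_bot, isCompl_top_bot⟩

theorem good_sup (L : LMAlg I A) {e f : A} (he : Good L e) (hf : Good L f) :
    Good L (e ⊔ f) := by
  obtain ⟨hm, e', hm', hc⟩ := he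
  obtain ⟨hn, f', hn', hd⟩ := hf
  exact ⟨fun j => by rw [L.phi_sup, hm, hn], e' ⊓ f',
    fun j => by rw [L.phi_inf, hm', hn'], hc.sup_inf hd⟩

theorem good_inf (L : LMAlg I A) {e f : A} (he : Good L e) (hf : Good L f) :
    Good L (e ⊓ f) := by
  obtain ⟨hm, e', hm', hc⟩ := he
  obtain ⟨hn, f', hn', hd⟩ := hf
  exact ⟨fun j => by rw [L.phi_inf, hm, hn], e' ⊔ f',
    fun j => by rw [L.phi_sup, hm', hn'], hc.inf_sup hd⟩

theorem good_compl (L : LMAlg I A) {e : A} (he : Good L e) :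
    ∃ e', Good L e' ∧ IsCompl e e' := by
  obtain ⟨hm, e', hm', hc⟩ := he
  exact ⟨e', ⟨hm', e, hm, hc.symm⟩, hc⟩

theorem phibar_isCompl (L : LMAlg I A) (i : I) (x : A) :
    IsCompl (L.phi i x) (L.phibar i x) :=
  isCompl_iff.mpr ⟨disjoint_iff.mpr (L.inf_phibar i x),
    codisjoint_iff.mpr (L.sup_phibar i x)⟩

theorem good_phi (L : LMAlg I A) (i : I) (x : A) : Good L (L.phi i x) := by
  refine ⟨fun j => L.phi_phi j i x, L.phibar i x, fun j => ?_, phibar_isCompl L i x⟩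
  have h1 : IsCompl (L.phi i x) (L.phi j (L.phibar i x)) := by
    refine isCompl_iff.mpr ⟨disjoint_iff.mpr ?_, codisjoint_iff.mpr ?_⟩
    · rw [← L.phi_phi j i x, ← L.phi_inf, L.inf_phibar, L.phi_bot]
    · rw [← L.phi_phi j i x, ← L.phi_sup, L.sup_phibar, L.phi_top]
  exact ((phibar_isCompl L i x).right_unique h1).symm

/-- The reflexive-transitive closure of the union of two relations. -/
def UC (r s : A → A → Prop) : A → A → Prop :=
  Relation.ReflTransGen fun x y => r x y ∨ s x y

theorem uc_isLM (L : LMAlg I A) {r s : A → A → Prop} (hr : IsLMCongr L r)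
    (hs : IsLMCongr L s) : IsLMCongr L (UC r s) := by
  have hsym : Symmetric fun x y => r x y ∨ s x y :=
    fun x y h => h.imp hr.symm hs.symm
  refine ⟨fun x => .refl, fun h => @Std.Symm.symm _ _ (@Relation.ReflTransGen.stdSymm _ _ ⟨fun _ _ h => hsym h⟩) _ _ h,
    fun h1 h2 => h1.trans h2, ?_, ?_, ?_, ?_⟩
  · intro x y u v h1 h2
    have a1 : UC r s (x ⊔ u) (y ⊔ u) :=
      Relation.ReflTransGen.lift (fun z => z ⊔ u)
        (fun a b hab => hab.imp (fun h => hr.sup_congr h (hr.refl u))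
          (fun h => hs.sup_congr h (hs.refl u))) _ _ h1
    have a2 : UC r s (y ⊔ u) (y ⊔ v) :=
      Relation.ReflTransGen.lift (fun z => y ⊔ z)
        (fun a b hab => hab.imp (fun h => hr.sup_congr (hr.refl y) h)
          (fun h => hs.sup_congr (hs.refl y) h)) _ _ h2
    exact a1.trans a2
  · intro x y u v h1 h2
    have a1 : UC r s (x ⊓ u) (y ⊓ u) :=
      Relation.ReflTransGen.lift (fun z => z ⊓ u)
        (fun a b hab => hab.imp (fun h => hr.inf_congr h (hr.refl u))
          (fun h => hs.inf_congr h (hs.refl u))) _ _ h1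
    have a2 : UC r s (y ⊓ u) (y ⊓ v) :=
      Relation.ReflTransGen.lift (fun z => y ⊓ z)
        (fun a b hab => hab.imp (fun h => hr.inf_congr (hr.refl y) h)
          (fun h => hs.inf_congr (hs.refl y) h)) _ _ h2
    exact a1.trans a2
  · intro i x y h
    exact Relation.ReflTransGen.lift (L.phi i)
      (fun a b hab => hab.imp (hr.phi_congr i) (hs.phi_congr i)) _ _ h
  · intro i x y h
    exact Relation.ReflTransGen.lift (L.phibar i)
      (fun a b hab => hab.imp (hr.phibar_congr i) (hs.phibar_congr i)) _ _ h

/-- A step: an `r` or `s` related increasing pair of good elements. -/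
def StepG (L : LMAlg I A) (r s : A → A → Prop) (u v : A) : Prop :=
  (r u v ∨ s u v) ∧ u ≤ v ∧ Good L u ∧ Good L v

theorem stage1 (L : LMAlg I A) {r s : A → A → Prop} (hr : IsLMCongr L r)
    (hs : IsLMCongr L s) (i₀ : I) {x y : A} (h : UC r s x y) :
    ∀ v : A, Good L v → L.phi i₀ x ≤ v →
      ∃ w : A, Good L w ∧ L.phi i₀ y ≤ w ∧
        Relation.ReflTransGen (StepG L r s) v w := by
  induction h using Relation.ReflTransGen.head_induction_on with
  | refl => exact fun v hv hle => ⟨v, hv, hle, .refl⟩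
  | head hst hrest ih =>
    intro v hv hle
    rename_i a c
    have hv' : Good L (v ⊔ L.phi i₀ c) := good_sup L hv (good_phi L i₀ c)
    have hst' : r v (v ⊔ L.phi i₀ c) ∨ s v (v ⊔ L.phi i₀ c) := by
      rcases hst with h | h
      · have := hr.sup_congr (hr.refl v) (hr.phi_congr i₀ h)
        rw [sup_eq_left.mpr hle] at this
        exact Or.inl this
      · have := hs.sup_congr (hs.refl v) (hs.phi_congr i₀ h)
        rw [sup_eq_left.mpr hle] at this
        exact Or.inr this
    obtain ⟨w, hw, hwle, chain⟩ := ih (v ⊔ L.phi i₀ c) hv' le_sup_right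
    exact ⟨w, hw, hwle, chain.head ⟨hst', le_sup_left, hv, hv'⟩⟩

theorem stage2 (L : LMAlg I A) {r s : A → A → Prop} (hr : IsLMCongr L r)
    (hs : IsLMCongr L s) {x y : A} (h : Relation.ReflTransGen (StepG L r s) x y) :
    Good L x → ∃ e, Good L e ∧ x ≤ e ∧ r x e ∧ s e y := by
  induction h using Relation.ReflTransGen.head_induction_on with
  | refl => exact fun hx => ⟨_, hx, le_rfl, hr.refl _, hs.refl _⟩
  | head hst hrest ih =>
    intro hva
    rename_i a c
    obtain ⟨hrs, hlac, hga, hgc⟩ := hst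
    obtain ⟨e', hge', hce', hrce', hse'y⟩ := ih hgc
    rcases hrs with h | h
    · exact ⟨e', hge', le_trans hlac hce', hr.trans h hrce', hse'y⟩
    · obtain ⟨c', hgc', hcc⟩ := good_compl L hgc
      refine ⟨a ⊔ (e' ⊓ c'), good_sup L hva (good_inf L hge' hgc'), le_sup_left, ?_, ?_⟩
      · have h1 := hr.inf_congr hrce' (hr.refl c')
        rw [hcc.inf_eq_bot] at h1
        have h2 := hr.sup_congr (hr.refl a) h1
        rw [sup_bot_eq] at h2
        exact h2
      · have h1 := hs.sup_congr h (hs.refl (e' ⊓ c'))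
        have h2 : c ⊔ (e' ⊓ c') = e' := by
          rw [sup_inf_left, hcc.sup_eq_top, inf_top_eq, sup_eq_right.mpr hce']
        rw [h2] at h1
        exact hs.trans h1 hse'y

/-- The explicit relation `x ⊔ e = y ⊔ e`. -/
theorem rho_isLM (L : LMAlg I A) {e : A} (he : Good L e) :
    IsLMCongr L fun x y => x ⊔ e = y ⊔ e := by
  obtain ⟨hm, e', hm', hc⟩ := he
  have phi_cong : ∀ (i : I) {x y : A}, x ⊔ e = y ⊔ e →
      L.phi i x ⊔ e = L.phi i y ⊔ e := by
    intro i x y h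
    rw [← hm i, ← L.phi_sup, h, L.phi_sup, hm i]
  refine ⟨fun x => rfl, fun h => h.symm, fun h1 h2 => h1.trans h2, ?_, ?_, phi_cong, ?_⟩
  · intro x y u v h1 h2
    calc x ⊔ u ⊔ e = (x ⊔ e) ⊔ (u ⊔ e) := by rw [sup_sup_sup_comm, sup_idem]
    _ = (y ⊔ e) ⊔ (v ⊔ e) := by rw [h1, h2]
    _ = y ⊔ v ⊔ e := by rw [sup_sup_sup_comm, sup_idem]
  · intro x y u v h1 h2
    calc x ⊓ u ⊔ e = (x ⊔ e) ⊓ (u ⊔ e) := by rw [sup_inf_right]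
    _ = (y ⊔ e) ⊓ (v ⊔ e) := by rw [h1, h2]
    _ = y ⊓ v ⊔ e := by rw [sup_inf_right]
  · intro i x y h
    have hφ : L.phi i x ⊔ e = L.phi i y ⊔ e := phi_cong i h
    have h2 : L.phi i x ⊓ e' = L.phi i y ⊓ e' := by
      have k : ∀ u : A, (u ⊔ e) ⊓ e' = u ⊓ e' := fun u => by
        rw [inf_sup_right, hc.inf_eq_bot, sup_bot_eq]
      rw [← k (L.phi i x), ← k (L.phi i y), hφ]
    have key : ∀ u : A, IsCompl (L.phi i u ⊓ e') (L.phibar i u ⊔ e) := by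
      intro u
      refine isCompl_iff.mpr ⟨disjoint_sup_right.mpr ⟨?_, ?_⟩, codisjoint_inf_left.mpr ⟨?_, ?_⟩⟩
      · exact Disjoint.mono_left inf_le_left
          (disjoint_iff.mpr (L.inf_phibar i u))
      · exact Disjoint.mono_left inf_le_right
          (disjoint_iff.mpr hc.symm.inf_eq_bot)
      · exact Codisjoint.mono_right le_sup_left
          (codisjoint_iff.mpr (L.sup_phibar i u))
      · exact Codisjoint.mono_right le_sup_right
          (codisjoint_iff.mpr hc.symm.sup_eq_top)
    have k1 := key x
    rw [h2] at k1
    exact k1.right_unique (key y)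

theorem distrib_key (L : LMAlg I A) {r s ρ : A → A → Prop}
    (hr : IsLMCongr L r) (hs : IsLMCongr L s) (hρ : IsLMCongr L ρ)
    (hmeet : ∀ x y, (r x y ∧ s x y) ↔ x = y)
    {x y : A} (hrxy : r x y)
    {u v : A} (h : UC ρ s u v) :
    ρ ((u ⊔ x) ⊓ y) ((v ⊔ x) ⊓ y) := by
  have glem : ∀ b : A, r ((b ⊔ x) ⊓ y) y := by
    intro b
    have h1 := hr.sup_congr (hr.refl b) hrxy
    have h2 := hr.inf_congr h1 (hr.refl y)
    have e3 : (b ⊔ y) ⊓ y = y := inf_eq_right.mpr le_sup_right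
    rw [e3] at h2
    exact h2
  induction h with
  | refl => exact hρ.refl _
  | tail hab hbc ih =>
    rename_i b c
    refine hρ.trans ih ?_
    rcases hbc with h | h
    · exact hρ.inf_congr (hρ.sup_congr h (hρ.refl x)) (hρ.refl y)
    · have hstep : s ((b ⊔ x) ⊓ y) ((c ⊔ x) ⊓ y) :=
        hs.inf_congr (hs.sup_congr h (hs.refl x)) (hs.refl y)
      have hrr : r ((b ⊔ x) ⊓ y) ((c ⊔ x) ⊓ y) :=
        hr.trans (glem b) (hr.symm (glem c))
      have heq := (hmeet _ _).mp ⟨hrr, hstep⟩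
      rw [heq]
      exact hρ.refl _

end Stmt16Aux

/-- every Boolean LM_θ-congruence is both a principal LM_θ-congruence and
a principal θ-congruence. -/
theorem stmt16 {I A : Type*} [LinearOrder I] [DistribLattice A] [BoundedOrder A]
    (L : LMAlg I A) (r : A → A → Prop) (hr : IsBooleanLMCongr L r) :
    IsPrincipalLMCongr L r ∧ IsPrincipalThetaCongr L r := by
  classical
  obtain ⟨hLM, s, hsLM, hmeet, hjoin⟩ := hr
  by_cases hI : IsEmpty I
  · -- trivial algebra: all elements equal
    have hall : ∀ x y : A, x = y := fun x y => L.determined x y (fun i => (hI.false i).elim)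
    have hr' : ∀ x y : A, r x y := fun x y => (hall x y) ▸ hLM.refl x
    refine ⟨⟨⊥, ⊥, hLM, hLM.refl ⊥, fun t ht hb x y _ => (hall x y) ▸ ht.refl x⟩,
      ⟨⊥, ⊥, ?_, hLM.refl ⊥, fun t ht hb x y _ => (hall x y) ▸ ht.refl x⟩⟩
    exact ⟨hLM.refl, hLM.symm, hLM.trans, hLM.sup_congr, hLM.inf_congr,
      fun x y => ⟨fun _ i => (hI.false i).elim, fun _ => hr' x y⟩⟩
  · obtain ⟨i₀⟩ := not_isEmpty_iff.mp hI
    -- the join of r and s is total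
    have hJlm := Stmt16Aux.uc_isLM L hLM hsLM
    have hJtot : ∀ x y : A, Stmt16Aux.UC r s x y :=
      hjoin _ hJlm (fun x y h => Relation.ReflTransGen.single (Or.inl h))
        (fun x y h => Relation.ReflTransGen.single (Or.inr h))
    -- get a good chain from ⊥ to ⊤
    obtain ⟨w, hw, hwle, chain⟩ := Stmt16Aux.stage1 L hLM hsLM i₀ (hJtot ⊥ ⊤) ⊥
      (Stmt16Aux.good_bot L) (by rw [L.phi_bot])
    have hw_top : w = ⊤ := top_le_iff.mp (by rw [← L.phi_top i₀]; exact hwle)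
    rw [hw_top] at chain
    -- extract the element e
    obtain ⟨e, hge, -, hre, hse⟩ := Stmt16Aux.stage2 L hLM hsLM chain (Stmt16Aux.good_bot L)
    -- hre : r ⊥ e, hse : s e ⊤
    have hρlm := Stmt16Aux.rho_isLM L hge
    -- ρ ⊆ r
    have rho_sub_r : ∀ x y : A, x ⊔ e = y ⊔ e → r x y := by
      intro x y h
      have hx : r x (x ⊔ e) := by
        have := hLM.sup_congr (hLM.refl x) hre
        rwa [sup_bot_eq] at this
      have hy : r y (y ⊔ e) := by
        have := hLM.sup_congr (hLM.refl y) hre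
        rwa [sup_bot_eq] at this
      rw [h] at hx
      exact hLM.trans hx (hLM.symm hy)
    -- r ⊆ ρ, via distributivity of the congruence lattice
    have hTlm := Stmt16Aux.uc_isLM L hρlm hsLM
    have hT01 : Stmt16Aux.UC (fun x y => x ⊔ e = y ⊔ e) s ⊥ ⊤ := by
      refine Relation.ReflTransGen.trans (Relation.ReflTransGen.single (Or.inl ?_))
        (Relation.ReflTransGen.single (Or.inr hse))
      show (⊥ : A) ⊔ e = e ⊔ e
      rw [bot_sup_eq, sup_idem]
    have hTtot : ∀ x y : A, Stmt16Aux.UC (fun x y => x ⊔ e = y ⊔ e) s x y := by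
      have hb : ∀ x : A, Stmt16Aux.UC (fun x y => x ⊔ e = y ⊔ e) s ⊥ x := by
        intro x
        have := hTlm.inf_congr (hTlm.refl x) hT01
        rwa [inf_bot_eq, inf_top_eq] at this
      exact fun x y => hTlm.trans (hTlm.symm (hb x)) (hb y)
    have r_sub_rho : ∀ x y : A, r x y → x ⊔ e = y ⊔ e := by
      intro x y hxy
      have hmid : r (x ⊓ y) (x ⊔ y) := by
        have h1 : r (x ⊓ y) y := by
          have := hLM.inf_congr hxy (hLM.refl y)
          rwa [inf_idem] at this
        have h2 : r (x ⊔ y) y := by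
          have := hLM.sup_congr hxy (hLM.refl y)
          rwa [sup_idem] at this
        exact hLM.trans h1 (hLM.symm h2)
      have key := Stmt16Aux.distrib_key L hLM hsLM hρlm hmeet hmid (hTtot (x ⊓ y) (x ⊔ y))
      -- key : ρ ((x⊓y ⊔ x⊓y) ⊓ (x⊔y)) ((x⊔y ⊔ x⊓y) ⊓ (x⊔y))
      have e1 : (x ⊓ y ⊔ x ⊓ y) ⊓ (x ⊔ y) = x ⊓ y := by
        rw [sup_idem, inf_eq_left]
        exact le_trans inf_le_left le_sup_left
      have e2 : (x ⊔ y ⊔ x ⊓ y) ⊓ (x ⊔ y) = x ⊔ y := by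
        rw [sup_eq_left.mpr (le_trans inf_le_left le_sup_left), inf_idem]
      rw [e1, e2] at key
      -- key : (x ⊓ y) ⊔ e = (x ⊔ y) ⊔ e
      have hxe : x ⊔ e = (x ⊔ y) ⊔ e := by
        refine le_antisymm (sup_le_sup_right le_sup_left e) ?_
        rw [← key]
        exact sup_le_sup_right inf_le_left e
      have hye : y ⊔ e = (x ⊔ y) ⊔ e := by
        refine le_antisymm (sup_le_sup_right le_sup_right e) ?_
        rw [← key]
        exact sup_le_sup_right inf_le_right e
      rw [hxe, hye]
    have hrρ : ∀ x y : A, r x y ↔ x ⊔ e = y ⊔ e :=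
      fun x y => ⟨r_sub_rho x y, rho_sub_r x y⟩
    -- minimality works for any lattice-congruence-like relation containing (⊥, e)
    have hr0e : r ⊥ e := hre
    refine ⟨⟨⊥, e, hLM, hr0e, ?_⟩, ⟨⊥, e, ?_, hr0e, ?_⟩⟩
    · intro t ht hte x y hxy
      have hx : t x (x ⊔ e) := by
        have := ht.sup_congr (ht.refl x) hte
        rwa [sup_bot_eq] at this
      have hy : t y (y ⊔ e) := by
        have := ht.sup_congr (ht.refl y) hte
        rwa [sup_bot_eq] at this
      rw [(hrρ x y).mp hxy] at hx
      exact ht.trans hx (ht.symm hy)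
    · -- r is a θ-congruence
      refine ⟨hLM.refl, hLM.symm, hLM.trans, hLM.sup_congr, hLM.inf_congr, ?_⟩
      intro x y
      constructor
      · exact fun h i => hLM.phi_congr i h
      · intro h
        refine (hrρ x y).mpr (L.determined _ _ (fun i => ?_))
        rw [L.phi_sup, L.phi_sup, hge.1 i]
        exact (hrρ _ _).mp (h i)
    · intro t ht hte x y hxy
      have hx : t x (x ⊔ e) := by
        have := ht.sup_congr (ht.refl x) hte
        rwa [sup_bot_eq] at this
      have hy : t y (y ⊔ e) := by
        have := ht.sup_congr (ht.refl y) hte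
        rwa [sup_bot_eq] at this
      rw [(hrρ x y).mp hxy] at hx
      exact ht.trans hx (ht.symm hy)
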